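/- Let R be a Dedekind domain and S an overring of R. The kernel of the pushforward map ι₊ : Pic(R) → Pic(S) is the subgroup of Pic(R) generated by the classes of those nonzero prime ideals 𝔭 of R with 𝔭S = S. Hence Pic(S) ≅ Pic(R)/H where H is that subgroup. -/

import Mathlib

open scoped nonZeroDivisors

section Helpers

set_option linter.unusedSectionVars false
set_option linter.unusedVariables false

variable {R : Type*} [CommRing R] [IsDomain R] [IsDedekindDomain R]
  {K : Type*} [Field K] [Algebra R K] [IsFractionRing R K]
  {S : Subalgebra R K} [IsDedekindDomain S]

/-- The "denominator ideal" of an element `s : K` with respect to `R`. -/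
private def denomIdealAux (s : K) : Ideal R where
  carrier := {r : R | ∃ t : R, algebraMap R K r * s = algebraMap R K t}
  add_mem' := by
    rintro a b ⟨t, ht⟩ ⟨t', ht'⟩
    exact ⟨t + t', by rw [map_add, map_add, add_mul, ht, ht']⟩
  zero_mem' := ⟨0, by simp⟩
  smul_mem' := by
    rintro c x ⟨t, ht⟩
    exact ⟨c * t, by rw [smul_eq_mul, map_mul, map_mul, mul_assoc, ht]⟩

/-- If the prime `𝔭` survives in the overring `S`, then `S ⊆ R_𝔭`. -/
private theorem exists_denom_notMem (𝔭 : Ideal R) (hp : 𝔭.IsPrime) (hp0 : 𝔭 ≠ ⊥)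
    (hsurv : 𝔭.map (algebraMap R S) ≠ ⊤) (s : S) :
    ∃ u r : R, u ∉ 𝔭 ∧ (s : K) * algebraMap R K u = algebraMap R K r := by
  by_cases hD : denomIdealAux (R := R) (s : K) ≤ 𝔭
  · exfalso
    obtain ⟨E, hDE⟩ := Ideal.dvd_iff_le.mpr hD
    have hD0 : denomIdealAux (R := R) (s : K) ≠ ⊥ := by
      obtain ⟨⟨n, d⟩, h⟩ := IsLocalization.surj R⁰ (s : K)
      intro hbot
      have : (d : R) ∈ denomIdealAux (R := R) (s : K) := ⟨n, by rw [mul_comm]; exact h⟩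
      rw [hbot, Ideal.mem_bot] at this
      exact nonZeroDivisors.coe_ne_zero d this
    have hE0 : E ≠ 0 := by rintro rfl; rw [mul_zero] at hDE; exact hD0 hDE
    have hED : ¬E ≤ denomIdealAux (R := R) (s : K) := by
      intro hle
      have h1 : E ≤ 𝔭 * E := hDE ▸ hle
      have h2 : 𝔭 * E ≤ E := Ideal.mul_le_right
      have : 𝔭 * E = ⊤ * E := by rw [Ideal.top_mul]; exact le_antisymm h2 h1
      exact hp.ne_top (mul_right_cancel₀ hE0 this)
    obtain ⟨e, heE, heD⟩ := SetLike.not_le_iff_exists.mp hED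
    set x : K := algebraMap R K e * (s : K) with hx
    have hxS : x ∈ S := (algebraMap R S e * s).2
    have hxnr : ¬∃ t : R, x = algebraMap R K t := fun ⟨t, ht⟩ => heD ⟨t, ht ▸ rfl⟩
    have hnum : ∀ p ∈ 𝔭, ∃ t : R, x * algebraMap R K p = algebraMap R K t := by
      intro p hp𝔭
      have hpe : p * e ∈ denomIdealAux (R := R) (s : K) := by
        rw [hDE]; exact Ideal.mul_mem_mul hp𝔭 heE
      obtain ⟨t, ht⟩ := hpe
      refine ⟨t, ?_⟩
      rw [hx, ← ht, map_mul]; ring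
    by_cases hcase : ∃ p ∈ 𝔭, ∃ t : R, x * algebraMap R K p = algebraMap R K t ∧ t ∉ 𝔭
    · obtain ⟨p, hp𝔭, t, hxt, ht𝔭⟩ := hcase
      apply hsurv
      have htS : algebraMap R S t ∈ 𝔭.map (algebraMap R S) := by
        have hmem : algebraMap R S p ∈ 𝔭.map (algebraMap R S) :=
          Ideal.mem_map_of_mem _ hp𝔭
        have : algebraMap R S t = (⟨x, hxS⟩ : S) * algebraMap R S p := by
          apply Subtype.ext
          exact hxt.symm
        rw [this]
        exact Ideal.mul_mem_left _ _ hmem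
      obtain ⟨y, i, hi𝔭, hyi⟩ := (hp.isMaximal hp0).exists_inv ht𝔭
      rw [Ideal.eq_top_iff_one]
      have : (1 : S) = algebraMap R S y * algebraMap R S t + algebraMap R S i := by
        rw [← map_mul, ← map_add, hyi, map_one]
      rw [this]
      exact Ideal.add_mem _ (Ideal.mul_mem_left _ _ htS) (Ideal.mem_map_of_mem _ hi𝔭)
    · push_neg at hcase
      have hint : IsIntegral R x := by
        apply isIntegral_of_smul_mem_submodule
          (Submodule.map (Algebra.linearMap R K) 𝔭) ?_ ?_ x
        · rintro n ⟨p, hp𝔭, rfl⟩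
          obtain ⟨t, ht⟩ := hnum p hp𝔭
          have ht𝔭 : t ∈ 𝔭 := hcase p hp𝔭 t ht
          exact ⟨t, ht𝔭, by simpa [Algebra.linearMap_apply, smul_eq_mul] using ht.symm⟩
        · intro hbot
          obtain ⟨p, hp𝔭, hpne⟩ := Submodule.exists_mem_ne_zero_of_ne_bot hp0
          have : algebraMap R K p ∈ Submodule.map (Algebra.linearMap R K) 𝔭 :=
            ⟨p, hp𝔭, rfl⟩
          rw [hbot, Submodule.mem_bot] at this
          exact hpne (IsFractionRing.injective R K (by simpa using this))
        · exact (IsNoetherian.noetherian 𝔭).map _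
      obtain ⟨t, ht⟩ := IsIntegrallyClosed.isIntegral_iff.mp hint
      exact hxnr ⟨t, ht.symm⟩
  · obtain ⟨u, huD, hu𝔭⟩ := SetLike.not_le_iff_exists.mp hD
    obtain ⟨t, ht⟩ := huD
    exact ⟨u, t, hu𝔭, by rw [mul_comm]; exact ht⟩

private theorem exists_denom_notMem_S (𝔭 : Ideal R) (hp : 𝔭.IsPrime) (hp0 : 𝔭 ≠ ⊥)
    (hsurv : 𝔭.map (algebraMap R S) ≠ ⊤) (s : S) :
    ∃ u r : R, u ∉ 𝔭 ∧ s * algebraMap R S u = algebraMap R S r := by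
  obtain ⟨u, r, hu, h⟩ := exists_denom_notMem 𝔭 hp hp0 hsurv s
  exact ⟨u, r, hu, Subtype.ext h⟩

private theorem exists_num_of_mem_map (𝔭 : Ideal R) (hp : 𝔭.IsPrime) (hp0 : 𝔭 ≠ ⊥)
    (hsurv : 𝔭.map (algebraMap R S) ≠ ⊤) (I : Ideal R) {y : S}
    (hy : y ∈ I.map (algebraMap R S)) :
    ∃ u z : R, u ∉ 𝔭 ∧ z ∈ I ∧ y * algebraMap R S u = algebraMap R S z := by
  have hy' : y ∈ Ideal.span (algebraMap R S '' I) := by rwa [Ideal.map] at hy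
  clear hy
  induction hy' using Submodule.span_induction with
  | mem w hw =>
    obtain ⟨z, hz, rfl⟩ := hw
    exact ⟨1, z, hp.ne_top ∘ (Ideal.eq_top_of_isUnit_mem _ · isUnit_one), hz, by simp⟩
  | zero => exact ⟨1, 0, hp.ne_top ∘ (Ideal.eq_top_of_isUnit_mem _ · isUnit_one),
      Ideal.zero_mem _, by simp⟩
  | add y₁ y₂ h₁ h₂ ih₁ ih₂ =>
    obtain ⟨u₁, z₁, hu₁, hz₁, he₁⟩ := ih₁
    obtain ⟨u₂, z₂, hu₂, hz₂, he₂⟩ := ih₂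
    refine ⟨u₁ * u₂, u₂ * z₁ + u₁ * z₂, fun h => ?_,
      Ideal.add_mem _ (Ideal.mul_mem_left _ _ hz₁) (Ideal.mul_mem_left _ _ hz₂), ?_⟩
    · rcases hp.mem_or_mem h with h | h
      exacts [hu₁ h, hu₂ h]
    · rw [map_mul, add_mul, map_add, map_mul, map_mul]
      rw [show y₁ * (algebraMap R S u₁ * algebraMap R S u₂)
          = y₁ * algebraMap R S u₁ * algebraMap R S u₂ by ring, he₁,
        show y₂ * (algebraMap R S u₁ * algebraMap R S u₂)
          = y₂ * algebraMap R S u₂ * algebraMap R S u₁ by ring, he₂]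
      ring
  | smul s' y' h' ih =>
    obtain ⟨u, z, hu, hz, he⟩ := ih
    obtain ⟨u', r', hu', he'⟩ := exists_denom_notMem_S 𝔭 hp hp0 hsurv s'
    refine ⟨u' * u, r' * z, fun h => ?_, Ideal.mul_mem_left _ _ hz, ?_⟩
    · rcases hp.mem_or_mem h with h | h
      exacts [hu' h, hu h]
    · rw [smul_eq_mul, map_mul, map_mul]
      rw [show s' * y' * (algebraMap R S u' * algebraMap R S u)
          = s' * algebraMap R S u' * (y' * algebraMap R S u) by ring, he, he']

private theorem pow_dvd_iff_of_map_eq (𝔭 : Ideal R) (hp : 𝔭.IsPrime) (hp0 : 𝔭 ≠ ⊥)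
    (hsurv : 𝔭.map (algebraMap R S) ≠ ⊤) (I : Ideal R) {a : R}
    (hmap : I.map (algebraMap R S) = Ideal.span {algebraMap R S a})
    (k : ℕ) : 𝔭 ^ k ∣ I ↔ 𝔭 ^ k ∣ Ideal.span {a} := by
  have hinj : Function.Injective (algebraMap R S) :=
    fun _ _ h => IsFractionRing.injective R K (congrArg Subtype.val h)
  have haI : ∃ u : R, u ∉ 𝔭 ∧ u * a ∈ I := by
    have : algebraMap R S a ∈ I.map (algebraMap R S) := by
      rw [hmap]; exact Ideal.subset_span rfl
    obtain ⟨u, z, hu, hz, he⟩ := exists_num_of_mem_map 𝔭 hp hp0 hsurv I this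
    rw [← map_mul] at he
    have haz : a * u = z := hinj he
    exact ⟨u, hu, by rw [mul_comm]; exact haz ▸ hz⟩
  have hIa : ∀ x ∈ I, ∃ u r : R, u ∉ 𝔭 ∧ u * x = a * r := by
    intro x hx
    have : algebraMap R S x ∈ Ideal.span {algebraMap R S a} := by
      rw [← hmap]; exact Ideal.mem_map_of_mem _ hx
    rw [Ideal.mem_span_singleton] at this
    obtain ⟨s, hs⟩ := this
    obtain ⟨u, r, hu, he⟩ := exists_denom_notMem_S 𝔭 hp hp0 hsurv s
    refine ⟨u, r, hu, hinj ?_⟩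
    rw [map_mul, map_mul, hs, show algebraMap R S u * (algebraMap R S a * s)
      = algebraMap R S a * (s * algebraMap R S u) by ring, he]
  rcases Nat.eq_zero_or_pos k with rfl | hk
  · simp
  rw [Ideal.dvd_iff_le, Ideal.dvd_iff_le, Ideal.span_le, Set.singleton_subset_iff]
  have hprimary : ∀ z w : R, z * w ∈ 𝔭 ^ k → w ∉ 𝔭 → z ∈ 𝔭 ^ k := by
    intro z w hzw hw
    rcases Ideal.IsPrime.mem_pow_mul _ hzw with h | h
    · exact h
    · exact absurd h hw
  constructor
  · intro hIle
    obtain ⟨u, hu, hua⟩ := haI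
    exact hprimary a u (by rw [mul_comm]; exact hIle hua) hu
  · intro hale x hx
    obtain ⟨u, r, hu, hur⟩ := hIa x hx
    have : x * u ∈ 𝔭 ^ k := by
      rw [mul_comm, hur]
      exact Ideal.mul_mem_right _ _ hale
    exact hprimary x u this hu

private theorem count_eq_of_map_eq [DecidableEq (Ideal R)] (𝔭 : Ideal R) (hp : 𝔭.IsPrime)
    (hp0 : 𝔭 ≠ ⊥) (hsurv : 𝔭.map (algebraMap R S) ≠ ⊤) (I : Ideal R) (hI0 : I ≠ ⊥)
    {a : R} (ha : a ≠ 0)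
    (hmap : I.map (algebraMap R S) = Ideal.span {algebraMap R S a}) :
    (UniqueFactorizationMonoid.normalizedFactors I).count 𝔭
      = (UniqueFactorizationMonoid.normalizedFactors (Ideal.span {a})).count 𝔭 := by
  have hirr : Irreducible 𝔭 := (Ideal.prime_of_isPrime hp0 hp).irreducible
  have hA0 : Ideal.span {a} ≠ (⊥ : Ideal R) := by
    rwa [Ne, Ideal.span_singleton_eq_bot]
  have h1 := UniqueFactorizationMonoid.emultiplicity_eq_count_normalizedFactors hirr hI0
  have h2 := UniqueFactorizationMonoid.emultiplicity_eq_count_normalizedFactors hirr hA0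
  have h3 : emultiplicity 𝔭 I = emultiplicity 𝔭 (Ideal.span {a}) :=
    emultiplicity_eq_emultiplicity_iff.mpr
      (fun n => pow_dvd_iff_of_map_eq 𝔭 hp hp0 hsurv I hmap n)
  rw [h1, h2, normalize_eq] at h3
  exact_mod_cast h3

variable (S) in
private def dyingClasses : Set (ClassGroup R) :=
  {c : ClassGroup R | ∃ 𝔭 : (Ideal R)⁰,
    (𝔭 : Ideal R).IsPrime ∧ (𝔭 : Ideal R).map (algebraMap R S) = ⊤ ∧
    c = ClassGroup.mk0 𝔭}

private theorem prod_dying_mem (m : Multiset (Ideal R))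
    (hm : ∀ p ∈ m, Prime p ∧ p.map (algebraMap R S) = ⊤)
    (h0 : m.prod ∈ (Ideal R)⁰) :
    ClassGroup.mk0 ⟨m.prod, h0⟩ ∈ Subgroup.closure (dyingClasses S) := by
  induction m using Multiset.induction_on with
  | empty =>
    have : ClassGroup.mk0 ⟨Multiset.prod 0, h0⟩ = 1 := by
      rw [ClassGroup.mk0_eq_one_iff]
      exact ⟨⟨1, by simp [Ideal.one_eq_top]⟩⟩
    rw [this]; exact one_mem _
  | cons p t ih =>
    have hprod : (p ::ₘ t).prod = p * t.prod := Multiset.prod_cons p t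
    have hne : p * t.prod ≠ 0 := by
      rw [← hprod]; exact nonZeroDivisors.ne_zero (hprod ▸ h0)
    have hp0 : p ≠ 0 := fun h => hne (by rw [h, zero_mul])
    have ht0 : t.prod ≠ 0 := fun h => hne (by rw [h, mul_zero])
    have hpmem : p ∈ (Ideal R)⁰ := mem_nonZeroDivisors_of_ne_zero hp0
    have htmem : t.prod ∈ (Ideal R)⁰ := mem_nonZeroDivisors_of_ne_zero ht0
    have hsplit : (⟨(p ::ₘ t).prod, h0⟩ : (Ideal R)⁰)
        = ⟨p, hpmem⟩ * ⟨t.prod, htmem⟩ := by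
      apply Subtype.ext; exact hprod
    rw [hsplit, MonoidHom.map_mul]
    refine mul_mem (Subgroup.subset_closure ?_)
      (ih (fun q hq => hm q (Multiset.mem_cons_of_mem hq)) htmem)
    obtain ⟨hprime, hdies⟩ := hm p (Multiset.mem_cons_self p t)
    exact ⟨⟨p, hpmem⟩, Ideal.isPrime_of_prime hprime, hdies, rfl⟩

private theorem mk0_mem_of_map_principal (I : Ideal R) (hI : I ∈ (Ideal R)⁰)
    {a : R} (ha : a ≠ 0)
    (hmap : I.map (algebraMap R S) = Ideal.span {algebraMap R S a}) :
    ClassGroup.mk0 ⟨I, hI⟩ ∈ Subgroup.closure (dyingClasses S) := by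
  classical
  have hI0 : I ≠ ⊥ := nonZeroDivisors.ne_zero hI
  have hA0 : Ideal.span {a} ≠ (⊥ : Ideal R) := by rwa [Ne, Ideal.span_singleton_eq_bot]
  set nfI := UniqueFactorizationMonoid.normalizedFactors I with hnfI
  set nfA := UniqueFactorizationMonoid.normalizedFactors (Ideal.span {a}) with hnfA
  set dying : Ideal R → Prop := fun p => p.map (algebraMap R S) = ⊤ with hdying
  have hfilter : nfI.filter (fun p => ¬ dying p) = nfA.filter (fun p => ¬ dying p) := by
    ext q
    rw [Multiset.count_filter, Multiset.count_filter]
    by_cases hq : ¬ dying q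
    · simp only [hq, if_true]
      by_cases hirr : Irreducible q
      · have hq' : Prime q := UniqueFactorizationMonoid.irreducible_iff_prime.mp hirr
        exact count_eq_of_map_eq q (Ideal.isPrime_of_prime hq') hq'.ne_zero hq I hI0 ha hmap
      · rw [Multiset.count_eq_zero_of_notMem, Multiset.count_eq_zero_of_notMem]
        · exact fun h => hirr (UniqueFactorizationMonoid.irreducible_of_normalized_factor q h)
        · exact fun h => hirr (UniqueFactorizationMonoid.irreducible_of_normalized_factor q h)
    · simp [hq]
  have hall : ∀ (J : Ideal R) (hJ : J ≠ 0) (q : Ideal R),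
      q ∈ UniqueFactorizationMonoid.normalizedFactors J → q ≠ 0 :=
    fun J hJ q hq => (UniqueFactorizationMonoid.irreducible_of_normalized_factor q hq).ne_zero
  have hIprod : nfI.prod = I :=
    associated_iff_eq.mp (UniqueFactorizationMonoid.prod_normalizedFactors hI0)
  have hAprod : nfA.prod = Ideal.span {a} :=
    associated_iff_eq.mp (UniqueFactorizationMonoid.prod_normalizedFactors hA0)
  set D := nfA.filter dying with hD
  set E := nfI.filter dying with hE
  have hDne : D.prod ≠ 0 := Multiset.prod_ne_zero
    (fun h => (hall _ hA0 0 (Multiset.mem_of_mem_filter h)) rfl)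
  have hEne : E.prod ≠ 0 := Multiset.prod_ne_zero
    (fun h => (hall _ hI0 0 (Multiset.mem_of_mem_filter h)) rfl)
  have hkey : I * D.prod = Ideal.span {a} * E.prod := by
    conv_lhs => rw [← hIprod, ← Multiset.filter_add_not dying nfI]
    conv_rhs => rw [← hAprod, ← Multiset.filter_add_not dying nfA]
    rw [Multiset.prod_add, Multiset.prod_add, hfilter]
    ring
  have hDmem : D.prod ∈ (Ideal R)⁰ := mem_nonZeroDivisors_of_ne_zero hDne
  have hEmem : E.prod ∈ (Ideal R)⁰ := mem_nonZeroDivisors_of_ne_zero hEne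
  have hAmem : Ideal.span {a} ∈ (Ideal R)⁰ := mem_nonZeroDivisors_of_ne_zero hA0
  have h1 : ClassGroup.mk0 ⟨I, hI⟩ * ClassGroup.mk0 ⟨D.prod, hDmem⟩
      = ClassGroup.mk0 ⟨Ideal.span {a}, hAmem⟩ * ClassGroup.mk0 ⟨E.prod, hEmem⟩ := by
    rw [← MonoidHom.map_mul, ← MonoidHom.map_mul]
    congr 1
    exact Subtype.ext hkey
  have hA1 : ClassGroup.mk0 (⟨Ideal.span {a}, hAmem⟩ : (Ideal R)⁰) = 1 :=
    (ClassGroup.mk0_eq_one_iff _).mpr ⟨⟨a, rfl⟩⟩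
  rw [hA1, one_mul] at h1
  have hdymem : ∀ (J : Ideal R) (hJ : J ≠ 0) (q : Ideal R),
      q ∈ (UniqueFactorizationMonoid.normalizedFactors J).filter dying →
      Prime q ∧ q.map (algebraMap R S) = ⊤ := by
    intro J hJ q hq
    rw [Multiset.mem_filter] at hq
    exact ⟨UniqueFactorizationMonoid.irreducible_iff_prime.mp
      (UniqueFactorizationMonoid.irreducible_of_normalized_factor q hq.1), hq.2⟩
  have hDH := prod_dying_mem D (hdymem _ hA0) hDmem
  have hEH := prod_dying_mem E (hdymem _ hI0) hEmem
  rw [eq_mul_inv_of_mul_eq h1]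
  exact mul_mem hEH (inv_mem hDH)

end Helpers

theorem classGroup_pushforward_kernel (R : Type*) [CommRing R] [IsDomain R]
    [IsDedekindDomain R] (K : Type*) [Field K] [Algebra R K] [IsFractionRing R K]
    (S : Subalgebra R K) [IsDedekindDomain S]
    (f : ClassGroup R →* ClassGroup S)
    (hf : ∀ (I : Ideal R) (hI : I ∈ (Ideal R)⁰)
      (hJ : I.map (algebraMap R S) ∈ (Ideal S)⁰),
      f (ClassGroup.mk0 ⟨I, hI⟩) = ClassGroup.mk0 ⟨I.map (algebraMap R S), hJ⟩)
    (hsurj : Function.Surjective f) :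
    f.ker = Subgroup.closure {c : ClassGroup R | ∃ 𝔭 : (Ideal R)⁰,
        (𝔭 : Ideal R).IsPrime ∧ (𝔭 : Ideal R).map (algebraMap R S) = ⊤ ∧
        c = ClassGroup.mk0 𝔭} ∧
      Nonempty (ClassGroup S ≃*
        ClassGroup R ⧸ Subgroup.closure {c : ClassGroup R | ∃ 𝔭 : (Ideal R)⁰,
          (𝔭 : Ideal R).IsPrime ∧ (𝔭 : Ideal R).map (algebraMap R S) = ⊤ ∧
          c = ClassGroup.mk0 𝔭}) := by
  have hinj : Function.Injective (algebraMap R S) :=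
    fun _ _ h => IsFractionRing.injective R K (congrArg Subtype.val h)
  have hker : f.ker = Subgroup.closure (dyingClasses S) := by
    apply le_antisymm
    · intro c hc
      obtain ⟨I, rfl⟩ := ClassGroup.mk0_surjective c
      have hI0 : (I : Ideal R) ≠ ⊥ := nonZeroDivisors.ne_zero I.2
      have hJmem : (I : Ideal R).map (algebraMap R S) ∈ (Ideal S)⁰ := by
        apply mem_nonZeroDivisors_of_ne_zero
        rw [Ne, Ideal.zero_eq_bot, Ideal.map_eq_bot_iff_of_injective hinj]
        exact hI0
      rw [MonoidHom.mem_ker] at hc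
      rw [show (I : (Ideal R)⁰) = ⟨I.1, I.2⟩ from rfl, hf I.1 I.2 hJmem] at hc
      obtain ⟨s, hs⟩ := (ClassGroup.mk0_eq_one_iff hJmem).mp hc
      rw [Ideal.submodule_span_eq] at hs
      have hs0 : s ≠ 0 := by
        rintro rfl
        rw [Ideal.span_singleton_eq_bot.mpr rfl] at hs
        exact nonZeroDivisors.ne_zero hJmem (hs.trans Ideal.zero_eq_bot.symm)
      obtain ⟨⟨num, den⟩, hnd⟩ := IsLocalization.surj R⁰ (s : K)
      have hden0 : (den : R) ≠ 0 := nonZeroDivisors.coe_ne_zero den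
      have hnum0 : num ≠ 0 := by
        rintro rfl
        rw [map_zero] at hnd
        rcases mul_eq_zero.mp hnd with h | h
        · exact hs0 (Subtype.ext h)
        · exact hden0 (IsFractionRing.injective R K (by rw [h, map_zero]))
      have hsden : s * algebraMap R S (den : R) = algebraMap R S num :=
        Subtype.ext hnd
      have hdenmem : Ideal.span {(den : R)} ∈ (Ideal R)⁰ :=
        mem_nonZeroDivisors_of_ne_zero (by rwa [Ne, Ideal.zero_eq_bot, Ideal.span_singleton_eq_bot])
      have hImem' : (I : Ideal R) * Ideal.span {(den : R)} ∈ (Ideal R)⁰ :=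
        mul_mem I.2 hdenmem
      have hmap' : ((I : Ideal R) * Ideal.span {(den : R)}).map (algebraMap R S)
          = Ideal.span {algebraMap R S num} := by
        rw [Ideal.map_mul, hs, Ideal.map_span, Set.image_singleton,
          Ideal.span_singleton_mul_span_singleton, hsden]
      have heq : ClassGroup.mk0 ⟨(I : Ideal R) * Ideal.span {(den : R)}, hImem'⟩
          = ClassGroup.mk0 I := by
        have hsplit : (⟨(I : Ideal R) * Ideal.span {(den : R)}, hImem'⟩ : (Ideal R)⁰)
            = I * ⟨Ideal.span {(den : R)}, hdenmem⟩ := rfl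
        rw [hsplit, MonoidHom.map_mul,
          (ClassGroup.mk0_eq_one_iff hdenmem).mpr ⟨⟨(den : R), rfl⟩⟩, mul_one]
      rw [← heq]
      exact mk0_mem_of_map_principal _ hImem' hnum0 hmap'
    · rw [Subgroup.closure_le]
      rintro c ⟨𝔭, hprime, hdies, rfl⟩
      rw [SetLike.mem_coe, MonoidHom.mem_ker]
      have hJmem : (𝔭 : Ideal R).map (algebraMap R S) ∈ (Ideal S)⁰ := by
        rw [hdies]
        exact mem_nonZeroDivisors_of_ne_zero (by rw [Ne, Ideal.zero_eq_bot]; exact top_ne_bot)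
      rw [show (𝔭 : (Ideal R)⁰) = ⟨𝔭.1, 𝔭.2⟩ from rfl, hf 𝔭.1 𝔭.2 hJmem,
        ClassGroup.mk0_eq_one_iff]
      exact ⟨⟨1, by rw [hdies]; exact (Ideal.span_singleton_one).symm⟩⟩
  refine ⟨hker, ⟨?_⟩⟩
  exact (QuotientGroup.quotientKerEquivOfSurjective f hsurj).symm.trans
    (QuotientGroup.quotientMulEquivOfEq hker)
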